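/- arXiv:1108.5095 — 5 statements merged into one kernel-verified Lean document; each statement's English description precedes it below -/
import Mathlib

section
/- For every decreasing sequence α = (l_0, l_1, …, l_r) of numbers from {0,…,k}, the minimum of Y^k_α equals Σ_{i=0}^r ⌊2^{l_i − 1}⌋. -/
/-- The `k`-bit reversal permutation of `{0,…,2^k−1}`. -/
def revBits (k x : ℕ) : ℕ := ∑ i ∈ Finset.range k, 2 ^ i * (x / 2 ^ (k - 1 - i) % 2)

/-- The sets of time slots `Y^k_α`.  A (decreasing) sequence `α = (l_0,…,l_r)` of the paper
is represented here as the list `[l_r, …, l_0]`, with the most recently appended level first: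
`Y^k_{()} = {0,…,2^k−1}` and `Y^k_{α·(l)} = {y ∈ Y^k_α : ⌈log₂(y − min Y^k_α + 1)⌉ = l}`. -/
noncomputable def Y (k : ℕ) : List ℕ → Finset ℕ
  | [] => Finset.range (2 ^ k)
  | l :: α => (Y k α).filter (fun y => Nat.clog 2 (y - sInf {z : ℕ | z ∈ Y k α} + 1) = l)

/-- Validity of the (reversed) sequence: the paper's `α` is strictly decreasing with
entries in `{0,…,k}`, i.e. the reversed list is strictly increasing with entries `≤ k`. -/
def ValidSeq (k : ℕ) (α : List ℕ) : Prop :=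
  List.Pairwise (· < ·) α ∧ ∀ l ∈ α, l ≤ k

/-- The ranks `X^k_α = revBits_k(Y^k_α)`. -/
noncomputable def X (k : ℕ) (α : List ℕ) : Finset ℕ := (Y k α).image (revBits k)

/-- `step^k_{()} = 1` and `step^k_{α·(l)} = 2^{k−l+1}`. -/
def stepA (k : ℕ) : List ℕ → ℕ
  | [] => 1
  | l :: _ => 2 ^ (k - l + 1)

/-- width of the interval `Y^k_α`. -/
def cY (k : ℕ) : List ℕ → ℕ
  | [] => 2 ^ k
  | l :: _ => max 1 (2 ^ l / 2)

lemma cY_pos (k : ℕ) (α : List ℕ) : 1 ≤ cY k α := by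
  cases α with
  | nil => exact Nat.one_le_two_pow
  | cons l α => exact le_max_left _ _

lemma pow_le_cY (k l : ℕ) (α : List ℕ) (h : ValidSeq k (l :: α)) : 2 ^ l ≤ cY k α := by
  cases α with
  | nil => exact Nat.pow_le_pow_right (by norm_num) (h.2 l (by simp))
  | cons l' β =>
    have hl : l < l' := (List.pairwise_cons.mp h.1).1 l' (by simp)
    obtain ⟨m, rfl⟩ : ∃ m, l' = m + 1 := ⟨l' - 1, by omega⟩
    have : 2 ^ (m + 1) / 2 = 2 ^ m := by
      rw [pow_succ, Nat.mul_div_cancel] ; norm_num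
    calc 2 ^ l ≤ 2 ^ m := Nat.pow_le_pow_right (by norm_num) (by omega)
    _ ≤ max 1 (2 ^ (m + 1) / 2) := by rw [this]; exact le_max_right _ _

lemma Y_eq (k : ℕ) (α : List ℕ) (h : ValidSeq k α) :
    Y k α = Finset.Ico ((α.map (fun l => 2 ^ l / 2)).sum)
      ((α.map (fun l => 2 ^ l / 2)).sum + cY k α) := by
  induction α with
  | nil =>
    show Finset.range (2 ^ k) = _
    simp only [List.map_nil, List.sum_nil, cY, Finset.range_eq_Ico, Nat.zero_add]
  | cons l α ih =>
    have hv : ValidSeq k α := ⟨(List.pairwise_cons.mp h.1).2, fun x hx => h.2 x (by simp [hx])⟩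
    set m := (α.map (fun l => 2 ^ l / 2)).sum with hm
    clear_value m
    have hY : Y k α = Finset.Ico m (m + cY k α) := ih hv
    have hc : 1 ≤ cY k α := cY_pos k α
    have hinf : sInf {z : ℕ | z ∈ Y k α} = m := by
      have : {z : ℕ | z ∈ Y k α} = Set.Ico m (m + cY k α) := by
        ext z
        simp only [Set.mem_setOf_eq, hY, Finset.mem_Ico, Set.mem_Ico]
      rw [this]
      exact csInf_Ico (by omega)
    have hpc : 2 ^ l ≤ cY k α := pow_le_cY k l α h
    show (Y k α).filter (fun y => Nat.clog 2 (y - sInf {z : ℕ | z ∈ Y k α} + 1) = l)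
        = _
    rw [hinf, hY]
    ext y
    simp only [Finset.mem_filter, Finset.mem_Ico, List.map_cons, List.sum_cons, ← hm]
    constructor
    · rintro ⟨⟨h1, h2⟩, h3⟩
      rcases Nat.eq_zero_or_pos l with rfl | hl
      · have : y - m + 1 ≤ 2 ^ 0 := (Nat.clog_le_iff_le_pow (by norm_num)).mp (le_of_eq h3)
        simp only [pow_zero] at this
        simp only [pow_zero, cY]
        omega
      · have hle : y - m + 1 ≤ 2 ^ l := (Nat.clog_le_iff_le_pow (by norm_num)).mp (le_of_eq h3)
        have hgt : 2 ^ (l - 1) < y - m + 1 := by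
          refine (Nat.lt_clog_iff_pow_lt (by norm_num)).mp ?_
          omega
        obtain ⟨j, rfl⟩ : ∃ j, l = j + 1 := ⟨l - 1, by omega⟩
        have e1 : 2 ^ (j + 1) / 2 = 2 ^ j := by
          rw [pow_succ, Nat.mul_div_cancel]; norm_num
        have e2 : (2:ℕ) ^ (j + 1) = 2 ^ j + 2 ^ j := by rw [pow_succ]; ring
        rw [e2] at hle
        simp only [Nat.add_sub_cancel] at hgt
        simp only [cY, e1]
        rw [max_eq_right Nat.one_le_two_pow]
        omega
    · rintro ⟨h1, h2⟩
      rcases Nat.eq_zero_or_pos l with rfl | hl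
      · simp only [pow_zero, cY] at h1 h2
        have hy : y = m := by omega
        refine ⟨⟨by omega, by omega⟩, ?_⟩
        simp [hy]
      · obtain ⟨j, rfl⟩ : ∃ j, l = j + 1 := ⟨l - 1, by omega⟩
        have e1 : 2 ^ (j + 1) / 2 = 2 ^ j := by
          rw [pow_succ, Nat.mul_div_cancel]; norm_num
        have e2 : 2 ^ (j + 1) = 2 ^ j + 2 ^ j := by rw [pow_succ]; ring
        simp only [e1, cY] at h1 h2
        have hcm : max 1 (2 ^ j) = 2 ^ j := max_eq_right Nat.one_le_two_pow
        rw [hcm] at h2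
        refine ⟨⟨by omega, by omega⟩, ?_⟩
        have hle : Nat.clog 2 (y - m + 1) ≤ j + 1 :=
          (Nat.clog_le_iff_le_pow (by norm_num)).mpr (by omega)
        have hgt : j < Nat.clog 2 (y - m + 1) :=
          (Nat.lt_clog_iff_pow_lt (by norm_num)).mpr (by omega)
        omega

/-- `min Y^k_{(l_0,…,l_r)} = ∑_i ⌊2^{l_i−1}⌋`. -/
theorem Y_min (k : ℕ) (α : List ℕ) (h : ValidSeq k α) :
    sInf {y : ℕ | y ∈ Y k α} = (α.map (fun l => 2 ^ l / 2)).sum := by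
  have hY := Y_eq k α h
  have hc := cY_pos k α
  have : {y : ℕ | y ∈ Y k α} = Set.Ico ((α.map (fun l => 2 ^ l / 2)).sum)
      ((α.map (fun l => 2 ^ l / 2)).sum + cY k α) := by
    ext z; simp [hY]
  rw [this]
  exact csInf_Ico (by omega)
end

section
/- For every decreasing sequence α and level l with 0 < l ≤ log_2|Y^k_α|, an element y belongs to Y^k_{α·(l)} if and only if min Y^k_α + 2^{l−1} ≤ y < min Y^k_α + 2^l. -/
lemma my_clog_eq_iff {l n : ℕ} (hl : 0 < l) :
    Nat.clog 2 n = l ↔ 2 ^ (l - 1) < n ∧ n ≤ 2 ^ l := by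
  constructor
  · intro h
    refine ⟨?_, (Nat.clog_le_iff_le_pow one_lt_two).1 h.le⟩
    by_contra hc
    push_neg at hc
    have := (Nat.clog_le_iff_le_pow one_lt_two).2 hc
    omega
  · rintro ⟨h1, h2⟩
    have ha := (Nat.clog_le_iff_le_pow one_lt_two).2 h2
    have hb : ¬ Nat.clog 2 n ≤ l - 1 := by
      intro hc
      have := (Nat.clog_le_iff_le_pow one_lt_two).1 hc
      omega
    omega

lemma my_sInf_Ico {m n : ℕ} (h : m < n) :
    sInf {z : ℕ | z ∈ Finset.Ico m n} = m := by
  have h1 : m ∈ {z : ℕ | z ∈ Finset.Ico m n} := by simp [h]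
  refine le_antisymm (Nat.sInf_le h1) ?_
  have := Nat.sInf_mem (Set.nonempty_of_mem h1)
  exact (Finset.mem_Ico.mp this).1

def levelS (k : ℕ) : List ℕ → ℕ
  | [] => k
  | l :: _ => l - 1

lemma Y_eq_Ico (k : ℕ) : ∀ α, ValidSeq k α →
    ∃ m, Y k α = Finset.Ico m (m + 2 ^ levelS k α) := by
  intro α
  induction α with
  | nil =>
    intro _
    exact ⟨0, by simp only [Y, levelS, Finset.range_eq_Ico, Nat.zero_add]⟩
  | cons l α ih =>
    intro hv
    have hvt : ValidSeq k α := ⟨hv.1.of_cons, fun x hx => hv.2 x (List.mem_cons_of_mem _ hx)⟩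
    obtain ⟨m, hm⟩ := ih hvt
    set s := levelS k α with hs
    have hls : l ≤ s := by
      cases α with
      | nil => simpa [levelS, hs] using hv.2 l (by simp)
      | cons l' rest =>
        have : l < l' := (List.pairwise_cons.1 hv.1).1 l' (by simp)
        simp only [levelS, hs]
        omega
    have hsinf : sInf {z : ℕ | z ∈ Y k α} = m := by
      rw [hm]; exact my_sInf_Ico (Nat.lt_add_of_pos_right (by positivity))
    have hmem : ∀ y, y ∈ Y k (l :: α) ↔
        (m ≤ y ∧ y < m + 2 ^ s) ∧ Nat.clog 2 (y - m + 1) = l := by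
      intro y
      simp only [Y, Finset.mem_filter, hsinf]
      rw [hm, Finset.mem_Ico]
    have h2l : 2 ^ (l - 1) ≤ 2 ^ l := Nat.pow_le_pow_right (by norm_num) (by omega)
    have hss : 2 ^ l ≤ 2 ^ s := Nat.pow_le_pow_right (by norm_num) hls
    have hpos : 0 < 2 ^ (l - 1) := pow_pos (by norm_num) _
    refine ⟨m + (2 ^ l - 2 ^ (l - 1)), ?_⟩
    ext y
    rw [hmem y, Finset.mem_Ico]
    simp only [levelS]
    rcases Nat.eq_zero_or_pos l with rfl | hl0
    · have hclog : Nat.clog 2 (y - m + 1) = 0 ↔ y - m + 1 ≤ 1 := by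
        rw [show (1:ℕ) = 2 ^ 0 from rfl, ← Nat.clog_le_iff_le_pow one_lt_two, Nat.le_zero]
      rw [hclog]
      have : 0 < 2 ^ s := pow_pos (by norm_num) _
      simp only [pow_zero, Nat.zero_sub]
      omega
    · have hdouble : 2 ^ (l - 1) * 2 = 2 ^ l := by
        rw [← pow_succ]; congr 1; omega
      rw [my_clog_eq_iff hl0]
      omega

/-- For `0 < l ≤ log₂|Y^k_α|`:
`y ∈ Y^k_{α·(l)}` iff `min Y^k_α + 2^{l−1} ≤ y < min Y^k_α + 2^l`. -/
theorem Y_level_interval (k : ℕ) (α : List ℕ) (l : ℕ) (h : ValidSeq k α)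
    (hl0 : 0 < l) (hl : l ≤ Nat.log 2 (Y k α).card) (y : ℕ) :
    y ∈ Y k (l :: α) ↔
      sInf {z : ℕ | z ∈ Y k α} + 2 ^ (l - 1) ≤ y ∧ y < sInf {z : ℕ | z ∈ Y k α} + 2 ^ l := by
  obtain ⟨m, hm⟩ := Y_eq_Ico k α h
  set s := levelS k α with hs
  have hsinf : sInf {z : ℕ | z ∈ Y k α} = m := by
    rw [hm]; exact my_sInf_Ico (Nat.lt_add_of_pos_right (by positivity))
  have hcard : (Y k α).card = 2 ^ s := by rw [hm]; simp
  rw [hcard, Nat.log_pow one_lt_two] at hl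
  have hss : 2 ^ l ≤ 2 ^ s := Nat.pow_le_pow_right (by norm_num) hl
  have hdouble : 2 ^ (l - 1) * 2 = 2 ^ l := by
    rw [← pow_succ]; congr 1; omega
  have hpos : 0 < 2 ^ (l - 1) := pow_pos (by norm_num) _
  have hmem : y ∈ Y k (l :: α) ↔
      (m ≤ y ∧ y < m + 2 ^ s) ∧ Nat.clog 2 (y - m + 1) = l := by
    simp only [Y, Finset.mem_filter, hsinf]
    rw [hm, Finset.mem_Ico]
  rw [hmem, hsinf, my_clog_eq_iff hl0]
  omega
end

section
/- For every decreasing sequence α of levels, an element x belongs to X^k_α = revBits_k(Y^k_α) if and only if x = (min X^k_α + i · step^k_α) mod 2^k for some integer i; i.e., the ranks in X^k_α form an arithmetic progression modulo 2^k with common difference step^k_α. -/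
/-! ### Auxiliary lemmas about `revBits` -/

lemma sum_bits_lt (n : ℕ) (b : ℕ → ℕ) (hb : ∀ i, b i ≤ 1) :
    ∑ i ∈ Finset.range n, 2 ^ i * b i < 2 ^ n := by
  induction n with
  | zero => simp
  | succ n ih =>
    rw [Finset.sum_range_succ, pow_succ]
    have h1 : 2 ^ n * b n ≤ 2 ^ n * 1 := Nat.mul_le_mul_left _ (hb n)
    omega

lemma revBits_lt (k x : ℕ) : revBits k x < 2 ^ k :=
  sum_bits_lt k _ (fun i => by omega)

lemma revBits_succ (k x : ℕ) :
    revBits (k + 1) x = x / 2 ^ k % 2 + 2 * revBits k x := by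
  unfold revBits
  rw [Finset.sum_range_succ', Finset.mul_sum]
  have h1 : ∀ i ∈ Finset.range k,
      2 ^ (i + 1) * (x / 2 ^ (k + 1 - 1 - (i + 1)) % 2)
        = 2 * (2 ^ i * (x / 2 ^ (k - 1 - i) % 2)) := by
    intro i _
    have h : k + 1 - 1 - (i + 1) = k - 1 - i := by omega
    rw [h, pow_succ]
    ring
  rw [Finset.sum_congr rfl h1]
  simp [add_comm]

lemma revBits_add_pow_mul (t x c : ℕ) : revBits t (x + c * 2 ^ t) = revBits t x := by
  unfold revBits
  apply Finset.sum_congr rfl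
  intro i hi
  have hit : i < t := Finset.mem_range.mp hi
  congr 1
  set p := t - 1 - i with hp
  have hpt : p < t := by omega
  have h2 : c * 2 ^ t = c * 2 ^ (t - p - 1) * 2 * 2 ^ p := by
    rw [mul_assoc, mul_assoc, ← pow_succ']
    rw [← pow_add]
    congr 2
    omega
  rw [h2, Nat.add_mul_div_right _ _ (pow_pos two_pos p), Nat.add_mul_mod_self_right]

lemma bit_add_of_split (t m j p : ℕ) (hm : m % 2 ^ t = 0) (hj : j < 2 ^ t) :
    (m + j) / 2 ^ p % 2 = m / 2 ^ p % 2 + j / 2 ^ p % 2 := by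
  obtain ⟨q, hq⟩ : 2 ^ t ∣ m := Nat.dvd_of_mod_eq_zero hm
  subst hq
  by_cases hpt : p < t
  · have h1 : 2 ^ t * q = q * 2 ^ (t - p - 1) * 2 * 2 ^ p := by
      rw [mul_assoc, mul_assoc, ← pow_succ', ← pow_add, mul_comm]
      congr 2
      omega
    rw [h1, add_comm (q * 2 ^ (t - p - 1) * 2 * 2 ^ p) j,
      Nat.add_mul_div_right _ _ (pow_pos two_pos p),
      Nat.add_mul_mod_self_right,
      Nat.mul_div_cancel _ (pow_pos two_pos p),
      Nat.mul_mod_left]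
    omega
  · have hple : t ≤ p := le_of_not_gt hpt
    have hj0 : j / 2 ^ p = 0 :=
      Nat.div_eq_of_lt (lt_of_lt_of_le hj (Nat.pow_le_pow_right (by norm_num) hple))
    have hp2 : (2:ℕ) ^ p = 2 ^ t * 2 ^ (p - t) := by
      rw [← pow_add]; congr 1; omega
    have h1 : (2 ^ t * q + j) / 2 ^ p = (2 ^ t * q) / 2 ^ p := by
      rw [hp2, ← Nat.div_div_eq_div_mul, ← Nat.div_div_eq_div_mul,
        Nat.mul_add_div (pow_pos two_pos t), Nat.div_eq_of_lt hj,
        Nat.mul_div_cancel_left _ (pow_pos two_pos t)]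
      norm_num
    rw [h1, hj0]
    omega

lemma revBits_add_of_split (k t m j : ℕ) (hm : m % 2 ^ t = 0) (hj : j < 2 ^ t) :
    revBits k (m + j) = revBits k m + revBits k j := by
  unfold revBits
  rw [← Finset.sum_add_distrib]
  apply Finset.sum_congr rfl
  intro i _
  rw [bit_add_of_split t m j _ hm hj]
  ring

lemma revBits_shift (t s j : ℕ) (hj : j < 2 ^ t) :
    revBits (t + s) j = 2 ^ s * revBits t j := by
  induction s with
  | zero => simp
  | succ s ih =>
    have h : t + (s + 1) = (t + s) + 1 := rfl
    rw [h, revBits_succ, ih]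
    have hj0 : j / 2 ^ (t + s) = 0 :=
      Nat.div_eq_of_lt (lt_of_lt_of_le hj (Nat.pow_le_pow_right (by norm_num) (by omega)))
    rw [hj0, pow_succ]
    ring

lemma revBits_surj (t : ℕ) : ∀ y < 2 ^ t, ∃ x < 2 ^ t, revBits t x = y := by
  induction t with
  | zero =>
    intro y hy
    refine ⟨0, by norm_num, ?_⟩
    simp [revBits]
    omega
  | succ t ih =>
    intro y hy
    have h2 : y / 2 < 2 ^ t := by
      rw [pow_succ] at hy
      omega
    obtain ⟨x', hx', hrx⟩ := ih (y / 2) h2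
    refine ⟨x' + y % 2 * 2 ^ t, ?_, ?_⟩
    · have h3 : y % 2 * 2 ^ t ≤ 1 * 2 ^ t := Nat.mul_le_mul_right _ (by omega)
      rw [pow_succ]
      omega
    · rw [revBits_succ, revBits_add_pow_mul]
      have hd : (x' + y % 2 * 2 ^ t) / 2 ^ t = y % 2 := by
        rw [Nat.add_mul_div_right _ _ (pow_pos two_pos t), Nat.div_eq_of_lt hx', zero_add]
      rw [hd, hrx]
      omega

/-! ### Interval structure of `Y` -/

/-- The number of "free" low bits of `Y^k_α`. -/
def lowT (k : ℕ) : List ℕ → ℕ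
  | [] => k
  | l :: _ => l - 1

lemma lowT_nil (k : ℕ) : lowT k [] = k := rfl
lemma lowT_cons (k l : ℕ) (β : List ℕ) : lowT k (l :: β) = l - 1 := rfl

lemma lowT_le (k : ℕ) (α : List ℕ) (h : ValidSeq k α) : lowT k α ≤ k := by
  cases α with
  | nil => exact le_refl k
  | cons l β =>
    have : l ≤ k := h.2 l (by simp)
    show l - 1 ≤ k
    omega

lemma Y_interval (k : ℕ) (α : List ℕ) (h : ValidSeq k α) :
    ∃ m, m % 2 ^ lowT k α = 0 ∧ m + 2 ^ lowT k α ≤ 2 ^ k ∧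
      Y k α = (Finset.range (2 ^ lowT k α)).image (m + ·) := by
  induction α with
  | nil =>
    rw [lowT_nil]
    refine ⟨0, by simp, by simp, ?_⟩
    ext y
    simp [Y]
  | cons l α' ih =>
    obtain ⟨hs, hk⟩ := h
    have h' : ValidSeq k α' := ⟨hs.of_cons, fun l hl => hk l (List.mem_cons_of_mem _ hl)⟩
    obtain ⟨m, hm0, hmle, hY⟩ := ih h'
    rw [lowT_cons]
    have hlt' : l ≤ lowT k α' := by
      cases α' with
      | nil => rw [lowT_nil]; exact hk l (by simp)
      | cons l' β =>
        have hll : l < l' := (List.pairwise_cons.mp hs).1 l' (by simp)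
        rw [lowT_cons]
        omega
    have hmem : m ∈ Y k α' := by
      rw [hY]
      exact Finset.mem_image.mpr ⟨0, Finset.mem_range.mpr (pow_pos two_pos _), by simp⟩
    have hinf : sInf {z : ℕ | z ∈ Y k α'} = m := by
      apply le_antisymm (Nat.sInf_le hmem)
      apply le_csInf ⟨m, hmem⟩
      intro b hb
      have hb' : b ∈ Y k α' := hb
      rw [hY] at hb'
      obtain ⟨j, _, hj⟩ := Finset.mem_image.mp hb'
      omega
    have hYl : Y k (l :: α') = (Y k α').filter (fun y => Nat.clog 2 (y - m + 1) = l) := by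
      rw [Y, hinf]
    cases l with
    | zero =>
      refine ⟨m, by omega, ?_, ?_⟩
      · have h1 : (1:ℕ) ≤ 2 ^ lowT k α' := Nat.one_le_two_pow
        norm_num
        omega
      · rw [hYl]
        ext y
        simp only [Finset.mem_filter, hY, Finset.mem_image, Finset.mem_range]
        norm_num
        constructor
        · rintro ⟨⟨j, hj, rfl⟩, hcl⟩
          have : m + j - m + 1 ≤ 2 ^ 0 := (Nat.clog_le_iff_le_pow one_lt_two).mp (le_of_eq hcl)
          omega
        · rintro rfl
          refine ⟨⟨0, Nat.pow_pos two_pos, by simp⟩, ?_⟩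
          have h1 : m - m + 1 = 1 := by omega
          rw [h1]
          simp [Nat.clog]
    | succ n =>
      have h2n : (2:ℕ) ^ (n+1) ≤ 2 ^ lowT k α' := Nat.pow_le_pow_right (by norm_num) hlt'
      have h2 : (2:ℕ)^(n+1) = 2^n + 2^n := by rw [pow_succ]; omega
      have hdvd : 2 ^ n ∣ m :=
        dvd_trans (pow_dvd_pow 2 (by omega)) (Nat.dvd_of_mod_eq_zero hm0)
      simp only [Nat.add_sub_cancel]
      refine ⟨m + 2 ^ n, ?_, by omega, ?_⟩
      · obtain ⟨q, rfl⟩ := hdvd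
        simp [Nat.add_mul_mod_self_left, Nat.mul_mod_right]
      · rw [hYl]
        ext y
        simp only [Finset.mem_filter, hY, Finset.mem_image, Finset.mem_range]
        constructor
        · rintro ⟨⟨j, hj, rfl⟩, hcl⟩
          have hup : m + j - m + 1 ≤ 2 ^ (n+1) :=
            (Nat.clog_le_iff_le_pow one_lt_two).mp (le_of_eq hcl)
          have hlo : 2 ^ n < m + j - m + 1 :=
            (Nat.lt_clog_iff_pow_lt one_lt_two).mp (by omega)
          exact ⟨j - 2 ^ n, by omega, by omega⟩
        · rintro ⟨j, hj, rfl⟩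
          refine ⟨⟨2 ^ n + j, by omega, by ring⟩, ?_⟩
          have he : m + 2 ^ n + j - m + 1 = 2 ^ n + j + 1 := by omega
          rw [he]
          have hle : Nat.clog 2 (2 ^ n + j + 1) ≤ n + 1 :=
            (Nat.clog_le_iff_le_pow one_lt_two).mpr (by omega)
          have hgt : n < Nat.clog 2 (2 ^ n + j + 1) :=
            (Nat.lt_clog_iff_pow_lt one_lt_two).mpr (by omega)
          omega

/-! ### Arithmetic-progression structure of `X` -/

lemma X_struct (k : ℕ) (α : List ℕ) (h : ValidSeq k α) :
    ∃ c, c < 2 ^ (k - lowT k α) ∧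
      X k α = (Finset.range (2 ^ lowT k α)).image (fun j => c + 2 ^ (k - lowT k α) * j) := by
  obtain ⟨m, hm0, hmle, hY⟩ := Y_interval k α h
  set t := lowT k α with ht
  have htk : t ≤ k := lowT_le k α h
  refine ⟨revBits k m, ?_, ?_⟩
  · have hzero : ∀ i ∈ Finset.range k, i ∉ Finset.range (k - t) →
        2 ^ i * (m / 2 ^ (k - 1 - i) % 2) = 0 := by
      intro i hi hni
      rw [Finset.mem_range] at hi
      rw [Finset.mem_range, not_lt] at hni
      have hbit : m / 2 ^ (k - 1 - i) % 2 = 0 := by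
        have hd : 2 ^ (k - 1 - i + 1) ∣ m :=
          dvd_trans (pow_dvd_pow 2 (by omega)) (Nat.dvd_of_mod_eq_zero hm0)
        obtain ⟨q, hq⟩ := hd
        rw [hq, pow_succ, mul_assoc, Nat.mul_div_cancel_left _ (pow_pos two_pos _),
          Nat.mul_mod_right]
      rw [hbit, mul_zero]
    have heq : revBits k m = ∑ i ∈ Finset.range (k - t), 2 ^ i * (m / 2 ^ (k - 1 - i) % 2) :=
      (Finset.sum_subset (Finset.range_subset_range.mpr (by omega)) hzero).symm
    rw [heq]
    exact sum_bits_lt _ _ (fun i => by omega)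
  · have key : ∀ j, j < 2 ^ t → revBits k (m + j) = revBits k m + 2 ^ (k - t) * revBits t j := by
      intro j hj
      rw [revBits_add_of_split k t m j hm0 hj]
      congr 1
      calc revBits k j = revBits (t + (k - t)) j := by rw [Nat.add_sub_cancel' htk]
        _ = 2 ^ (k - t) * revBits t j := revBits_shift t (k - t) j hj
    rw [X, hY, Finset.image_image]
    ext x
    simp only [Finset.mem_image, Finset.mem_range, Function.comp_apply]
    constructor
    · rintro ⟨j, hj, rfl⟩
      exact ⟨revBits t j, revBits_lt t j, (key j hj).symm⟩
    · rintro ⟨j', hj', rfl⟩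
      obtain ⟨j, hj, hrj⟩ := revBits_surj t j' hj'
      exact ⟨j, hj, by rw [key j hj, hrj]⟩

/-- The ranks `X^k_α` form an arithmetic progression mod `2^k` with difference `step^k_α`. -/
theorem X_arith_progression (k : ℕ) (α : List ℕ) (h : ValidSeq k α) (x : ℕ) :
    x ∈ X k α ↔ ∃ i : ℕ, x = (sInf {z : ℕ | z ∈ X k α} + i * stepA k α) % 2 ^ k := by
  obtain ⟨c, hc, hX⟩ := X_struct k α h
  set t := lowT k α with ht
  have htk : t ≤ k := lowT_le k α h
  have hpow : (2:ℕ) ^ (k - t) * 2 ^ t = 2 ^ k := by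
    rw [← pow_add]; congr 1; omega
  have hstep : stepA k α % 2 ^ k = 2 ^ (k - t) % 2 ^ k := by
    cases α with
    | nil =>
      show (1 : ℕ) % 2 ^ k = 2 ^ (k - k) % 2 ^ k
      norm_num
    | cons l β =>
      cases l with
      | zero =>
        show 2 ^ (k - 0 + 1) % 2 ^ k = 2 ^ (k - (0 - 1)) % 2 ^ k
        have h1 : (2:ℕ) ^ (k + 1) = 2 ^ k * 2 := pow_succ 2 k
        have h2 : k - (0 - 1) = k := by omega
        rw [h2]
        norm_num [h1, Nat.mul_mod_right, Nat.mod_self]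
      | succ n =>
        have hl : n + 1 ≤ k := h.2 (n + 1) (by simp)
        show 2 ^ (k - (n + 1) + 1) % 2 ^ k = 2 ^ (k - (n + 1 - 1)) % 2 ^ k
        congr 2
        omega
  have hcX : c ∈ X k α := by
    rw [hX]
    exact Finset.mem_image.mpr ⟨0, Finset.mem_range.mpr (pow_pos two_pos _), by simp⟩
  have hinf : sInf {z : ℕ | z ∈ X k α} = c := by
    apply le_antisymm (Nat.sInf_le hcX)
    apply le_csInf ⟨c, hcX⟩
    intro b hb
    have hb' : b ∈ X k α := hb
    rw [hX] at hb'
    obtain ⟨j, _, hj⟩ := Finset.mem_image.mp hb'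
    omega
  rw [hinf, hX]
  simp only [Finset.mem_image, Finset.mem_range]
  have hmodeq : ∀ i : ℕ, (c + i * stepA k α) % 2 ^ k = (c + i * 2 ^ (k - t)) % 2 ^ k := by
    intro i
    conv_lhs => rw [Nat.add_mod, Nat.mul_mod, hstep, ← Nat.mul_mod, ← Nat.add_mod]
  have hbound : ∀ j, j < 2 ^ t → c + j * 2 ^ (k - t) < 2 ^ k := by
    intro j hj
    have h4 : (j + 1) * 2 ^ (k - t) ≤ 2 ^ t * 2 ^ (k - t) :=
      Nat.mul_le_mul_right _ (by omega)
    have h5 : (j + 1) * 2 ^ (k - t) = j * 2 ^ (k - t) + 2 ^ (k - t) := by ring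
    have h6 : (2:ℕ) ^ t * 2 ^ (k - t) = 2 ^ k := by rw [← pow_add]; congr 1; omega
    omega
  constructor
  · rintro ⟨j, hj, rfl⟩
    refine ⟨j, ?_⟩
    rw [hmodeq j, mul_comm j (2 ^ (k - t)), Nat.mod_eq_of_lt (by rw [mul_comm]; exact hbound j hj)]
  · rintro ⟨i, rfl⟩
    refine ⟨i % 2 ^ t, Nat.mod_lt _ (pow_pos two_pos t), ?_⟩
    have hsplit : c + i * 2 ^ (k - t) =
        (c + i % 2 ^ t * 2 ^ (k - t)) + (i / 2 ^ t) * 2 ^ k := by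
      conv_lhs => rw [show i = 2 ^ t * (i / 2 ^ t) + i % 2 ^ t from (Nat.div_add_mod i (2 ^ t)).symm]
      rw [add_mul]
      have h7 : 2 ^ t * (i / 2 ^ t) * 2 ^ (k - t) = i / 2 ^ t * 2 ^ k := by
        rw [mul_comm (2 ^ t) (i / 2 ^ t), mul_assoc, mul_comm (2 ^ t) (2 ^ (k - t)), hpow]
      rw [h7]
      ring
    rw [hmodeq i, hsplit, Nat.add_mul_mod_self_right,
      Nat.mod_eq_of_lt (hbound _ (Nat.mod_lt _ (pow_pos two_pos t)))]
    ring
end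

section
/- For every decreasing sequence α of levels with α ≠ (), step^k_α ≥ min X^k_α + 1. -/
/-- auxiliary: the minimum of `Y k α`. -/
def mval (α : List ℕ) : ℕ := (α.map (fun l => 2 ^ l / 2)).sum

/-- auxiliary: the length of the interval `Y k α`. -/
def lenval (k : ℕ) : List ℕ → ℕ
  | [] => 2 ^ k
  | l :: _ => 2 ^ l - 2 ^ l / 2

lemma lenval_pos (k : ℕ) (α : List ℕ) : 0 < lenval k α := by
  cases α with
  | nil => exact pow_pos (by norm_num) _
  | cons l _ =>
    simp only [lenval]
    have := Nat.div_lt_self (pow_pos (show 0 < 2 by norm_num) l) (show 1 < 2 by norm_num)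
    omega

lemma clog_eq_iff (n l : ℕ) (hn : 1 ≤ n) : Nat.clog 2 n = l ↔ 2 ^ l / 2 < n ∧ n ≤ 2 ^ l := by
  have h1 : ∀ m, (Nat.clog 2 n ≤ m ↔ n ≤ 2 ^ m) :=
    fun m => (Nat.clog_le_iff_le_pow (by norm_num))
  have h2 : ∀ m, (m < Nat.clog 2 n ↔ 2 ^ m < n) :=
    fun m => (Nat.lt_clog_iff_pow_lt (by norm_num))
  cases l with
  | zero =>
    simp only [pow_zero]
    have := h1 0
    omega
  | succ l =>
    have e : 2 ^ (l + 1) / 2 = 2 ^ l := by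
      rw [pow_succ, Nat.mul_div_cancel _ (show 0 < 2 by norm_num)]
    rw [e]
    have a1 := h1 (l + 1)
    have a2 := h1 l
    have a3 := h2 l
    constructor
    · intro h; omega
    · intro h; omega

lemma Y_eq_Ico_s7 (k : ℕ) (α : List ℕ) (h : ValidSeq k α) :
    Y k α = Finset.Ico (mval α) (mval α + lenval k α) := by
  induction α with
  | nil =>
    show Finset.range (2 ^ k) = _
    rw [show mval [] = 0 from rfl, show lenval k [] = 2 ^ k from rfl,
      Finset.range_eq_Ico, Nat.zero_add]
  | cons l α ih =>
    obtain ⟨hs, hk⟩ := h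
    have hvα : ValidSeq k α := ⟨hs.of_cons, fun x hx => hk x (List.mem_cons_of_mem _ hx)⟩
    have hY := ih hvα
    have hlL : 2 ^ l ≤ lenval k α := by
      cases α with
      | nil =>
        simpa [lenval] using Nat.pow_le_pow_right (show 1 ≤ 2 by norm_num) (hk l (by simp))
      | cons l' β =>
        have hll' : l < l' := (List.pairwise_cons.mp hs).1 l' (by simp)
        have h1 : 2 ^ l ≤ 2 ^ l' / 2 := by
          have : 2 ^ (l + 1) ≤ 2 ^ l' := Nat.pow_le_pow_right (by norm_num) hll'
          rw [pow_succ] at this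
          exact Nat.le_div_iff_mul_le (by norm_num) |>.mpr this
        have h2 := Nat.div_mul_le_self (2 ^ l') 2
        show 2 ^ l ≤ 2 ^ l' - 2 ^ l' / 2
        omega
    have hInf : sInf {z : ℕ | z ∈ Finset.Ico (mval α) (mval α + lenval k α)} = mval α := by
      rw [show {z : ℕ | z ∈ Finset.Ico (mval α) (mval α + lenval k α)}
          = Set.Ico (mval α) (mval α + lenval k α) from by ext z; simp]
      exact csInf_Ico (by have := lenval_pos k α; omega)
    have hmval : mval (l :: α) = 2 ^ l / 2 + mval α := by simp [mval]
    have hlen : lenval k (l :: α) = 2 ^ l - 2 ^ l / 2 := rfl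
    have h2l : 2 ^ l / 2 < 2 ^ l :=
      Nat.div_lt_self (pow_pos (by norm_num) _) (by norm_num)
    show (Y k α).filter _ = _
    rw [hY, hInf, hmval, hlen]
    ext y
    simp only [Finset.mem_filter, Finset.mem_Ico]
    constructor
    · rintro ⟨⟨h1, h2⟩, h3⟩
      rw [clog_eq_iff _ _ (by omega)] at h3
      omega
    · intro hy
      refine ⟨⟨by omega, by omega⟩, ?_⟩
      rw [clog_eq_iff _ _ (by omega)]
      omega

lemma pow_pred_dvd_mval (l : ℕ) (α : List ℕ) (hs : List.Pairwise (· < ·) (l :: α)) :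
    2 ^ (l - 1) ∣ mval (l :: α) := by
  simp only [mval, List.map_cons, List.sum_cons]
  refine Nat.dvd_add ?_ ?_
  · rcases Nat.eq_zero_or_pos l with h0 | h0
    · simp [h0]
    · have e1 : 2 ^ l / 2 = 2 ^ (l - 1) := by
        conv_lhs => rw [show l = (l - 1) + 1 by omega]
        rw [pow_succ, Nat.mul_div_cancel _ (by norm_num)]
      rw [e1]
  induction α with
  | nil => simp
  | cons l' β ih =>
    simp only [List.map_cons, List.sum_cons]
    refine Nat.dvd_add ?_ ?_
    · have hll' : l < l' := (List.pairwise_cons.mp hs).1 l' (by simp)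
      have e2 : 2 ^ l' / 2 = 2 ^ (l' - 1) := by
        conv_lhs => rw [show l' = (l' - 1) + 1 by omega]
        rw [pow_succ, Nat.mul_div_cancel _ (by norm_num)]
      rw [e2]
      exact pow_dvd_pow 2 (by omega)
    · apply ih
      have h1 := List.pairwise_cons.mp hs
      have h2 := List.pairwise_cons.mp h1.2
      exact List.pairwise_cons.mpr ⟨fun b hb => h1.1 b (List.mem_cons_of_mem _ hb), h2.2⟩

lemma revBits_lt_s7 (k l m : ℕ) (hl : l ≤ k) (hdvd : 2 ^ (l - 1) ∣ m) :
    revBits k m < 2 ^ (k - l + 1) := by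
  have hb : ∀ i ∈ Finset.range k, 2 ^ i * (m / 2 ^ (k - 1 - i) % 2) ≤
      (if i ≤ k - l then 2 ^ i else 0) := by
    intro i hi
    simp only [Finset.mem_range] at hi
    by_cases hil : i ≤ k - l
    · simp only [if_pos hil]
      have : m / 2 ^ (k - 1 - i) % 2 ≤ 1 := Nat.lt_succ_iff.mp (Nat.mod_lt _ (by norm_num))
      calc 2 ^ i * (m / 2 ^ (k - 1 - i) % 2) ≤ 2 ^ i * 1 := Nat.mul_le_mul_left _ this
        _ = 2 ^ i := by ring
    · simp only [if_neg hil]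
      -- i > k - l, so k - 1 - i ≤ l - 2 < l - 1, hence the bit is 0
      have hl1 : 1 ≤ l := by omega
      obtain ⟨t, ht⟩ := hdvd
      have hlt : k - 1 - i < l - 1 := by omega
      have : m / 2 ^ (k - 1 - i) % 2 = 0 := by
        rw [ht]
        have : 2 ^ (l - 1) = 2 ^ (k - 1 - i) * 2 ^ (l - 1 - (k - 1 - i)) := by
          rw [← pow_add]; congr 1; omega
        rw [this, mul_assoc, Nat.mul_div_cancel_left _ (pow_pos (by norm_num) _)]
        have h2 : 2 ∣ 2 ^ (l - 1 - (k - 1 - i)) * t :=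
          (dvd_pow_self 2 (show l - 1 - (k - 1 - i) ≠ 0 by omega)).mul_right t
        omega
      simp [this]
  calc revBits k m ≤ ∑ i ∈ Finset.range k, (if i ≤ k - l then 2 ^ i else 0) :=
        Finset.sum_le_sum hb
    _ ≤ ∑ i ∈ Finset.range (k - l + 1), 2 ^ i := by
        rw [← Finset.sum_filter]
        apply Finset.sum_le_sum_of_subset
        intro x hx
        simp only [Finset.mem_filter, Finset.mem_range] at hx ⊢
        omega
    _ < 2 ^ (k - l + 1) := by
        have hgeom : ∀ n : ℕ, ∑ i ∈ Finset.range n, 2 ^ i = 2 ^ n - 1 := by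
          intro n
          induction n with
          | zero => simp
          | succ n ih =>
            rw [Finset.sum_range_succ, ih, pow_succ]
            have := Nat.one_le_two_pow (n := n)
            omega
        rw [hgeom]
        have := pow_pos (show 0 < 2 by norm_num) (k - l + 1)
        omega

/-- For nonempty `α`: `step^k_α ≥ min X^k_α + 1`. -/
theorem step_ge_min_add_one (k : ℕ) (α : List ℕ) (h : ValidSeq k α) (hne : α ≠ []) :
    sInf {z : ℕ | z ∈ X k α} + 1 ≤ stepA k α := by
  obtain ⟨l, β, rfl⟩ : ∃ l β, α = l :: β := by
    cases α with
    | nil => exact absurd rfl hne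
    | cons l β => exact ⟨l, β, rfl⟩
  have hY := Y_eq_Ico_s7 k (l :: β) h
  set m := mval (l :: β) with hm
  have hmem : m ∈ Y k (l :: β) := by
    rw [hY]
    simp only [Finset.mem_Ico]
    exact ⟨le_refl _, by have := lenval_pos k (l :: β); omega⟩
  have hX : revBits k m ∈ {z : ℕ | z ∈ X k (l :: β)} := by
    simp only [Set.mem_setOf_eq, X, Finset.mem_image]
    exact ⟨m, hmem, rfl⟩
  have h1 : sInf {z : ℕ | z ∈ X k (l :: β)} ≤ revBits k m := Nat.sInf_le hX
  have h2 : revBits k m < 2 ^ (k - l + 1) :=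
    revBits_lt_s7 k l m (h.2 l (by simp)) (pow_pred_dvd_mval l β h.1)
  simp only [stepA]
  omega
end

section
/- For every decreasing sequence α and every l ≥ 0, minStep(⋃_{i=0}^{l} X^k_{α·(i)}) ≥ 2^{k−l}. -/
/-! ### Auxiliary definitions and lemmas -/

/-- The exponent such that `Y k α` is an interval of length `2 ^ eOf k α`. -/
def eOf (k : ℕ) : List ℕ → ℕ
  | [] => k
  | h :: _ => h - 1

lemma sInf_Ico (m n : ℕ) (h : m < n) : sInf {z : ℕ | z ∈ Finset.Ico m n} = m := by
  have h1 : m ∈ {z : ℕ | z ∈ Finset.Ico m n} := Finset.mem_Ico.mpr ⟨le_refl _, h⟩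
  have h2 := Nat.sInf_le h1
  have h3 := Nat.sInf_mem (⟨m, h1⟩ : {z : ℕ | z ∈ Finset.Ico m n}.Nonempty)
  have h4 : m ≤ sInf {z : ℕ | z ∈ Finset.Ico m n} := (Finset.mem_Ico.mp h3).1
  omega

lemma Y_structure (k : ℕ) : ∀ α, ValidSeq k α →
    ∃ m, Y k α = Finset.Ico m (m + 2 ^ eOf k α) ∧ 2 ^ eOf k α ∣ m ∧
      m + 2 ^ eOf k α ≤ 2 ^ k := by
  intro α
  induction α with
  | nil =>
    intro _
    refine ⟨0, ?_, dvd_zero _, by simp [eOf]⟩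
    simp only [Y, eOf, Finset.range_eq_Ico, Nat.zero_add]
  | cons h t ih =>
    intro hv
    obtain ⟨hsort, hle⟩ := hv
    have hvt : ValidSeq k t := ⟨hsort.of_cons, fun l hl => hle l (List.mem_cons_of_mem _ hl)⟩
    obtain ⟨m, hY, hdvd, hub⟩ := ih hvt
    have he : h ≤ eOf k t := by
      cases t with
      | nil => simpa [eOf] using hle h List.mem_cons_self
      | cons h' t' =>
        have : h < h' := (List.pairwise_cons.mp hsort).1 h' List.mem_cons_self
        simp only [eOf]; omega
    have hp : 0 < 2 ^ eOf k t := pow_pos two_pos _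
    have hhe : 2 ^ h ≤ 2 ^ eOf k t := Nat.pow_le_pow_right (by norm_num) he
    have hinf : sInf {z : ℕ | z ∈ Y k t} = m := by
      rw [hY]; exact sInf_Ico _ _ (by omega)
    rcases Nat.eq_zero_or_pos h with rfl | hpos
    · refine ⟨m, ?_, by simpa [eOf] using hdvd, ?_⟩
      · rw [Y, hinf, hY]
        ext y
        have h0 : eOf k (0 :: t) = 0 := rfl
        rw [h0]
        simp only [Finset.mem_filter, Finset.mem_Ico, pow_zero]
        constructor
        · rintro ⟨⟨h1, h2⟩, h3⟩
          have : y - m + 1 ≤ 2 ^ 0 := by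
            rw [← Nat.clog_le_iff_le_pow one_lt_two, h3]
          simp only [pow_zero] at this
          omega
        · rintro ⟨h1, h2⟩
          have hy : y = m := by omega
          subst hy
          exact ⟨⟨le_refl _, by omega⟩, by simp⟩
      · have h0 : eOf k (0 :: t) = 0 := rfl
        rw [h0, pow_zero]; omega
    · have hsplit : 2 ^ (h - 1) + 2 ^ (h - 1) = 2 ^ h := by
        rw [← two_mul, ← pow_succ']
        congr 1; omega
      refine ⟨m + 2 ^ (h - 1), ?_, ?_, ?_⟩
      · rw [Y, hinf, hY]
        ext y
        have h0 : eOf k (h :: t) = h - 1 := rfl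
        rw [h0]
        simp only [Finset.mem_filter, Finset.mem_Ico]
        constructor
        · rintro ⟨⟨h1, h2⟩, h3⟩
          have hub2 : y - m + 1 ≤ 2 ^ h := by
            rw [← Nat.clog_le_iff_le_pow one_lt_two, h3]
          have hlb : 2 ^ (h - 1) < y - m + 1 := by
            rw [← Nat.lt_clog_iff_pow_lt one_lt_two, h3]; omega
          omega
        · rintro ⟨h1, h2⟩
          have hmem : m ≤ y ∧ y < m + 2 ^ eOf k t := by omega
          refine ⟨hmem, ?_⟩
          have hub2 : Nat.clog 2 (y - m + 1) ≤ h := by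
            rw [Nat.clog_le_iff_le_pow one_lt_two]; omega
          have hlb : h - 1 < Nat.clog 2 (y - m + 1) := by
            rw [Nat.lt_clog_iff_pow_lt one_lt_two]; omega
          omega
      · exact Nat.dvd_add (dvd_trans (pow_dvd_pow 2 (by omega : h - 1 ≤ eOf k t)) hdvd)
          (dvd_refl _)
      · have h0 : eOf k (h :: t) = h - 1 := rfl
        rw [h0]; omega

lemma union_Y (k l : ℕ) (α : List ℕ) (m : ℕ)
    (hY : Y k α = Finset.Ico m (m + 2 ^ eOf k α)) :
    (Finset.range (l + 1)).biUnion (fun i => Y k (i :: α)) =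
      Finset.Ico m (m + 2 ^ min l (eOf k α)) := by
  have hp : 0 < 2 ^ eOf k α := pow_pos two_pos _
  have hinf : sInf {z : ℕ | z ∈ Y k α} = m := by
    rw [hY]; exact sInf_Ico _ _ (by omega)
  have hYi : ∀ i : ℕ, Y k (i :: α) =
      (Finset.Ico m (m + 2 ^ eOf k α)).filter
        (fun y => Nat.clog 2 (y - m + 1) = i) := by
    intro i; rw [Y, hinf, hY]
  ext y
  simp only [Finset.mem_biUnion, Finset.mem_range, hYi, Finset.mem_filter, Finset.mem_Ico]
  have hmin : 2 ^ min l (eOf k α) = min (2 ^ l) (2 ^ eOf k α) := by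
    rcases le_total l (eOf k α) with hc | hc
    · rw [min_eq_left hc, min_eq_left (Nat.pow_le_pow_right (by norm_num) hc)]
    · rw [min_eq_right hc, min_eq_right (Nat.pow_le_pow_right (by norm_num) hc)]
  have hpl : 0 < 2 ^ l := pow_pos two_pos _
  constructor
  · rintro ⟨i, hi, ⟨h1, h2⟩, h3⟩
    have : y - m + 1 ≤ 2 ^ l := by
      rw [← Nat.clog_le_iff_le_pow one_lt_two, h3]; omega
    have := min_le_left (2 ^ l) (2 ^ eOf k α)
    have := min_le_right (2 ^ l) (2 ^ eOf k α)
    omega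
  · rintro ⟨h1, h2⟩
    refine ⟨Nat.clog 2 (y - m + 1), ?_, ⟨⟨h1, ?_⟩, rfl⟩⟩
    · have : y - m + 1 ≤ 2 ^ l := by
        have := min_le_left (2 ^ l) (2 ^ eOf k α); omega
      have := (Nat.clog_le_iff_le_pow one_lt_two).mpr this
      omega
    · have := min_le_right (2 ^ l) (2 ^ eOf k α); omega

lemma bit_lo (s m' r j : ℕ) (hj : j < s) :
    (2 ^ s * m' + r) / 2 ^ j % 2 = r / 2 ^ j % 2 := by
  have h1 : 2 ^ s * m' = 2 ^ j * (2 * (2 ^ (s - j - 1) * m')) := by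
    rw [← mul_assoc, ← mul_assoc, ← pow_succ, ← pow_add]
    congr 2; omega
  rw [h1, Nat.mul_add_div (pow_pos two_pos j), Nat.add_comm, Nat.add_mul_mod_self_left]

lemma bit_hi (s m' r j : ℕ) (hj : s ≤ j) (hr : r < 2 ^ s) :
    (2 ^ s * m' + r) / 2 ^ j = 2 ^ s * m' / 2 ^ j := by
  set A := 2 ^ s * m' with hA
  have hd : 2 ^ s ∣ A % 2 ^ j :=
    (Nat.dvd_mod_iff (pow_dvd_pow 2 hj)).mpr ⟨m', rfl⟩
  obtain ⟨t, ht⟩ := hd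
  have hlt : A % 2 ^ j < 2 ^ j := Nat.mod_lt _ (pow_pos two_pos j)
  have htlt : t < 2 ^ (j - s) := by
    by_contra hcon
    push_neg at hcon
    have : 2 ^ j ≤ 2 ^ s * t := by
      calc 2 ^ j = 2 ^ s * 2 ^ (j - s) := by rw [← pow_add]; congr 1; omega
        _ ≤ 2 ^ s * t := Nat.mul_le_mul_left _ hcon
    omega
  have hsum : A % 2 ^ j + r < 2 ^ j := by
    have : 2 ^ s * t + r < 2 ^ s * (t + 1) := by
      rw [Nat.mul_add, Nat.mul_one]; omega
    have h2 : 2 ^ s * (t + 1) ≤ 2 ^ s * 2 ^ (j - s) := Nat.mul_le_mul_left _ (by omega)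
    have h3 : 2 ^ s * 2 ^ (j - s) = 2 ^ j := by rw [← pow_add]; congr 1; omega
    omega
  conv_lhs => rw [← Nat.div_add_mod A (2 ^ j)]
  rw [Nat.add_assoc, Nat.mul_add_div (pow_pos two_pos j),
    Nat.div_eq_of_lt hsum, Nat.add_zero]

lemma revBits_split (k s m r : ℕ) (hs : s ≤ k) (hdvd : 2 ^ s ∣ m) (hr : r < 2 ^ s) :
    revBits k (m + r) = revBits k m + 2 ^ (k - s) * revBits s r := by
  obtain ⟨m', rfl⟩ := hdvd
  unfold revBits
  have hsplit : ∀ x : ℕ,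
      ∑ i ∈ Finset.range k, (2 ^ i * (x / 2 ^ (k - 1 - i) % 2)) =
      (∑ i ∈ Finset.Ico 0 (k - s), 2 ^ i * (x / 2 ^ (k - 1 - i) % 2)) +
      ∑ i ∈ Finset.Ico (k - s) k, 2 ^ i * (x / 2 ^ (k - 1 - i) % 2) := by
    intro x
    rw [Finset.sum_Ico_consecutive _ (Nat.zero_le _) (by omega), Finset.range_eq_Ico]
  rw [hsplit, hsplit]
  have hlo : ∀ i ∈ Finset.Ico 0 (k - s),
      2 ^ i * ((2 ^ s * m' + r) / 2 ^ (k - 1 - i) % 2) =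
      2 ^ i * (2 ^ s * m' / 2 ^ (k - 1 - i) % 2) := by
    intro i hi
    simp only [Finset.mem_Ico] at hi
    rw [bit_hi s m' r (k - 1 - i) (by omega) hr]
  have hhi0 : ∀ i ∈ Finset.Ico (k - s) k,
      2 ^ i * (2 ^ s * m' / 2 ^ (k - 1 - i) % 2) = 0 := by
    intro i hi
    simp only [Finset.mem_Ico] at hi
    have h1 : 2 ^ s * m' = 2 ^ (k - 1 - i) * (2 * (2 ^ (s - (k - 1 - i) - 1) * m')) := by
      rw [← mul_assoc, ← mul_assoc, ← pow_succ, ← pow_add]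
      congr 2; omega
    rw [h1, Nat.mul_div_cancel_left _ (pow_pos two_pos _), Nat.mul_mod_right, Nat.mul_zero]
  have hhi : ∑ i ∈ Finset.Ico (k - s) k, 2 ^ i * ((2 ^ s * m' + r) / 2 ^ (k - 1 - i) % 2) =
      2 ^ (k - s) * ∑ i ∈ Finset.range s, 2 ^ i * (r / 2 ^ (s - 1 - i) % 2) := by
    rw [Finset.sum_Ico_eq_sum_range]
    have hk : k - (k - s) = s := by omega
    rw [hk, Finset.mul_sum]
    apply Finset.sum_congr rfl
    intro i hi
    simp only [Finset.mem_range] at hi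
    rw [bit_lo s m' r _ (by omega : k - 1 - (k - s + i) < s)]
    have h1 : k - 1 - (k - s + i) = s - 1 - i := by omega
    rw [h1, ← mul_assoc, ← pow_add]
  rw [Finset.sum_congr rfl hlo, hhi, Finset.sum_congr rfl hhi0, Finset.sum_const_zero,
    Nat.add_zero]

/-- `minStep(⋃_{i=0}^{l} X^k_{α·(i)}) ≥ 2^{k−l}`: any two distinct elements of the union
of the first `l+1` levels differ by at least `2^{k−l}`. -/
theorem minStep_union_ge (k : ℕ) (α : List ℕ) (l : ℕ) (h : ValidSeq k α) :
    ∀ x ∈ (Finset.range (l + 1)).biUnion (fun i => X k (i :: α)),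
      ∀ y ∈ (Finset.range (l + 1)).biUnion (fun i => X k (i :: α)),
        x < y → 2 ^ (k - l) ≤ y - x := by
  obtain ⟨m, hY, hdvd, hub⟩ := Y_structure k α h
  set e := eOf k α with he
  set s := min l e with hs
  have hse : s ≤ e := min_le_right _ _
  have hsl : s ≤ l := min_le_left _ _
  have hek : e ≤ k := by
    have : 2 ^ e ≤ 2 ^ k := by omega
    exact (Nat.pow_le_pow_iff_right one_lt_two).mp this
  have hsk : s ≤ k := le_trans hse hek
  have hdvds : 2 ^ s ∣ m := dvd_trans (pow_dvd_pow 2 hse) hdvd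
  have hXY : (Finset.range (l + 1)).biUnion (fun i => X k (i :: α)) =
      (Finset.Ico m (m + 2 ^ s)).image (revBits k) := by
    have : (Finset.range (l + 1)).biUnion (fun i => X k (i :: α)) =
        ((Finset.range (l + 1)).biUnion (fun i => Y k (i :: α))).image (revBits k) := by
      rw [Finset.biUnion_image]
      rfl
    rw [this, union_Y k l α m hY]
  rw [hXY]
  intro x hx y hy hxy
  simp only [Finset.mem_image, Finset.mem_Ico] at hx hy
  obtain ⟨u, ⟨hu1, hu2⟩, hux⟩ := hx
  obtain ⟨v, ⟨hv1, hv2⟩, hvy⟩ := hy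
  have hru : u = m + (u - m) := by omega
  have hrv : v = m + (v - m) := by omega
  have hx' : x = revBits k m + 2 ^ (k - s) * revBits s (u - m) := by
    rw [← hux]
    conv_lhs => rw [hru]
    exact revBits_split k s m (u - m) hsk hdvds (by omega)
  have hy' : y = revBits k m + 2 ^ (k - s) * revBits s (v - m) := by
    rw [← hvy]
    conv_lhs => rw [hrv]
    exact revBits_split k s m (v - m) hsk hdvds (by omega)
  set a := revBits s (u - m)
  set b := revBits s (v - m)
  have hab : a < b := by
    by_contra hcon
    push_neg at hcon
    have : y ≤ x := by
      rw [hx', hy']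
      exact Nat.add_le_add_left (Nat.mul_le_mul_left _ hcon) _
    omega
  have hsub : y - x = 2 ^ (k - s) * (b - a) := by
    rw [hx', hy', Nat.mul_sub]
    omega
  rw [hsub]
  calc 2 ^ (k - l) ≤ 2 ^ (k - s) := Nat.pow_le_pow_right (by norm_num) (by omega)
    _ = 2 ^ (k - s) * 1 := (Nat.mul_one _).symm
    _ ≤ 2 ^ (k - s) * (b - a) := Nat.mul_le_mul_left _ (by omega)
end
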